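/- arXiv:2005.04784 — 3 statements merged into one kernel-verified Lean document; each statement's English description precedes it below -/
import Mathlib

section
/- For a ≤ c < d ≤ b, u ∈ C¹([a,b]), F continuous nonnegative, p > 1, ε > 0: ∫_c^d [ε^{p-1}|u'|^p/p + F(u)/ε] dx ≥ |∫_{u(c)}^{u(d)} (p F(s)/(p-1))^{(p-1)/p} ds|. -/
open Set MeasureTheory

private lemma young_aux {p ε : ℝ} (hp : 1 < p) (hε : 0 < ε) (A B : ℝ)
    (hA : 0 ≤ A) (hB : 0 ≤ B) :
    A * (p * B / (p - 1)) ^ ((p - 1) / p) ≤ ε ^ (p - 1) * A ^ p / p + B / ε := by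
  have hp0 : (0 : ℝ) < p := lt_trans one_pos hp
  have hp1 : (0 : ℝ) < p - 1 := sub_pos.2 hp
  set q : ℝ := p / (p - 1) with hq
  have hpq : p.HolderConjugate q := Real.HolderConjugate.conjExponent hp
  have hq0 : 0 < q := hpq.symm.pos
  set a : ℝ := ε ^ ((p - 1) / p) * A with ha
  set b : ℝ := (p * B / (p - 1)) ^ ((p - 1) / p) / ε ^ ((p - 1) / p) with hb
  have hεp : (0 : ℝ) < ε ^ ((p - 1) / p) := Real.rpow_pos_of_pos hε _
  have ha0 : 0 ≤ a := mul_nonneg hεp.le hA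
  have hb0 : 0 ≤ b := div_nonneg (Real.rpow_nonneg (by positivity) _) hεp.le
  have hyoung := Real.young_inequality_of_nonneg ha0 hb0 hpq
  have hab : a * b = A * (p * B / (p - 1)) ^ ((p - 1) / p) := by
    rw [ha, hb]; field_simp
  have hap : a ^ p = ε ^ (p - 1) * A ^ p := by
    rw [ha, Real.mul_rpow hεp.le hA, ← Real.rpow_mul hε.le]
    congr 2
    field_simp
  have hbq : b ^ q = (p * B / (p - 1)) / ε := by
    rw [hb, Real.div_rpow (Real.rpow_nonneg (by positivity) _) hεp.le,
      ← Real.rpow_mul (by positivity : (0:ℝ) ≤ p * B / (p - 1)),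
      ← Real.rpow_mul hε.le]
    have h1 : (p - 1) / p * q = 1 := by rw [hq]; field_simp
    rw [h1, Real.rpow_one, Real.rpow_one]
  have hbqq : b ^ q / q = B / ε := by
    rw [hbq, hq]
    field_simp
  calc A * (p * B / (p - 1)) ^ ((p - 1) / p) = a * b := hab.symm
    _ ≤ a ^ p / p + b ^ q / q := hyoung
    _ = ε ^ (p - 1) * A ^ p / p + B / ε := by rw [hap, hbqq]

theorem energy_lower_bound_interval (a b c d p ε : ℝ)
    (hac : a ≤ c) (hcd : c < d) (hdb : d ≤ b) (hp : 1 < p) (hε : 0 < ε)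
    (F : ℝ → ℝ) (hFc : Continuous F) (hFnn : ∀ u, 0 ≤ F u)
    (u : ℝ → ℝ) (hu : ContDiffOn ℝ 1 u (Set.Icc a b)) :
    |∫ s in (u c)..(u d), (p * F s / (p - 1)) ^ ((p - 1) / p)| ≤
      ∫ x in c..d, (ε ^ (p - 1) * |deriv u x| ^ p / p + F (u x) / ε) := by
  have hab : a < b := lt_of_le_of_lt hac (lt_of_lt_of_le hcd hdb)
  have hp1 : (0 : ℝ) < p - 1 := sub_pos.2 hp
  set g : ℝ → ℝ := fun s => (p * F s / (p - 1)) ^ ((p - 1) / p) with hg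
  have hgc : Continuous g := by
    apply Continuous.rpow_const
    · exact (continuous_const.mul hFc).div_const _
    · intro x; right; exact div_nonneg (sub_nonneg.2 hp.le) (le_of_lt (lt_trans one_pos hp))
  have hgnn : ∀ s, 0 ≤ g s := fun s => Real.rpow_nonneg
    (div_nonneg (mul_nonneg (lt_trans one_pos hp).le (hFnn s)) hp1.le) _
  set v : ℝ → ℝ := derivWithin u (Icc a b) with hv
  have hvc : ContinuousOn v (Icc a b) :=
    hu.continuousOn_derivWithin (uniqueDiffOn_Icc hab) le_rfl
  have hIcd : Icc c d ⊆ Icc a b := Icc_subset_Icc hac hdb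
  have hderiv : ∀ x ∈ Ioo c d, HasDerivAt u (v x) x := by
    intro x hx
    have hx' : x ∈ Ioo a b := ⟨lt_of_le_of_lt hac hx.1, lt_of_lt_of_le hx.2 hdb⟩
    have hnb : Icc a b ∈ nhds x := Icc_mem_nhds hx'.1 hx'.2
    have hd : HasDerivWithinAt u (v x) (Icc a b) x :=
      (hu.differentiableOn one_ne_zero x (hIcd (Ioo_subset_Icc_self hx))).hasDerivWithinAt
    exact hd.hasDerivAt hnb
  have huIcc : uIcc c d = Icc c d := uIcc_of_le hcd.le
  have huc : ContinuousOn u (Icc c d) := (hu.continuousOn).mono hIcd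
  -- change of variables
  have hchg : (∫ x in c..d, v x • (g ∘ u) x) = ∫ s in (u c)..(u d), g s := by
    apply intervalIntegral.integral_comp_smul_deriv''
    · rw [huIcc]; exact huc
    · intro x hx
      rw [min_eq_left hcd.le, max_eq_right hcd.le] at hx
      exact (hderiv x hx).hasDerivWithinAt
    · rw [huIcc]; exact hvc.mono hIcd
    · exact hgc.continuousOn
  -- integrability facts
  have hvcd : ContinuousOn v (Icc c d) := hvc.mono hIcd
  have hf1c : ContinuousOn (fun x => |v x * g (u x)|) (Icc c d) :=
    (hvcd.mul (hgc.comp_continuousOn huc)).abs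
  have hf2c : ContinuousOn (fun x => ε ^ (p - 1) * |v x| ^ p / p + F (u x) / ε) (Icc c d) := by
    apply ContinuousOn.add
    · apply ContinuousOn.div_const
      apply ContinuousOn.mul continuousOn_const
      apply ContinuousOn.rpow_const hvcd.abs
      intro x _; right; exact le_of_lt (lt_trans one_pos hp)
    · exact ((hFc.comp_continuousOn huc)).div_const _
  have hint1 : IntervalIntegrable (fun x => |v x * g (u x)|) volume c d := by
    rw [intervalIntegrable_iff_integrableOn_Icc_of_le hcd.le]
    exact hf1c.integrableOn_Icc
  have hint2 : IntervalIntegrable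
      (fun x => ε ^ (p - 1) * |v x| ^ p / p + F (u x) / ε) volume c d := by
    rw [intervalIntegrable_iff_integrableOn_Icc_of_le hcd.le]
    exact hf2c.integrableOn_Icc
  -- pointwise Young inequality
  have hpt : ∀ x ∈ Icc c d,
      |v x * g (u x)| ≤ ε ^ (p - 1) * |v x| ^ p / p + F (u x) / ε := by
    intro x _
    rw [abs_mul, abs_of_nonneg (hgnn (u x))]
    exact young_aux hp hε (|v x|) (F (u x)) (abs_nonneg _) (hFnn _)
  -- the interval integral with `deriv` equals the one with `v`
  have hae : ∀ᵐ x : ℝ, x ≠ d := by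
    have h0 : ({d}ᶜ : Set ℝ) ∈ ae volume :=
      MeasureTheory.compl_mem_ae_iff.mpr (measure_singleton d)
    exact Filter.eventually_iff.mpr (by exact h0)
  have hcongr : (∫ x in c..d, (ε ^ (p - 1) * |deriv u x| ^ p / p + F (u x) / ε)) =
      ∫ x in c..d, (ε ^ (p - 1) * |v x| ^ p / p + F (u x) / ε) := by
    apply intervalIntegral.integral_congr_ae
    filter_upwards [hae] with x hx hxI
    rw [uIoc_of_le hcd.le] at hxI
    have hxo : x ∈ Ioo c d := ⟨hxI.1, lt_of_le_of_ne hxI.2 hx⟩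
    rw [(hderiv x hxo).deriv]
  rw [hcongr, ← hchg]
  calc |∫ x in c..d, v x • (g ∘ u) x| ≤ ∫ x in c..d, |v x * g (u x)| := by
        simpa [smul_eq_mul, Function.comp] using
          intervalIntegral.abs_integral_le_integral_abs (f := fun x => v x * g (u x)) hcd.le
    _ ≤ ∫ x in c..d, (ε ^ (p - 1) * |v x| ^ p / p + F (u x) / ε) :=
        intervalIntegral.integral_mono_on hcd.le hint1 hint2 hpt
end

section
/- Let g : [0,1) → ℝ, g(s̄) = ∫₀^{s̄} (F(s) - F(s̄))^{-1/p} ds with F(u) = (1/(2n))(1-u²)^n, n > 1, p > 2. Then for each s̄ ∈ (0,1) the integral converges (is finite), and lim_{s̄→0⁺} g(s̄) = 0. -/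
open MeasureTheory Set Filter

private lemma rpow_sub_rpow_ge {n a b : ℝ} (hn : 1 < n) (hb : 0 < b) (hab : b ≤ a) :
    n * (a - b) * b ^ (n - 1) ≤ a ^ n - b ^ n := by
  have ha : 0 < a := lt_of_lt_of_le hb hab
  have hs : (-1 : ℝ) ≤ (a - b) / b := by
    have := div_nonneg (sub_nonneg.2 hab) hb.le; linarith
  have h1 : 1 + n * ((a - b) / b) ≤ (1 + (a - b) / b) ^ n :=
    one_add_mul_self_le_rpow_one_add hs hn.le
  have heq : 1 + (a - b) / b = a / b := by field_simp; ring
  rw [heq, Real.div_rpow ha.le hb.le] at h1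
  have hbn : 0 < b ^ n := Real.rpow_pos_of_pos hb n
  have hbm : b ^ (n - 1) * b = b ^ n := by
    rw [← Real.rpow_add_one hb.ne' (n - 1)]; norm_num
  have h2 := mul_le_mul_of_nonneg_right h1 hbn.le
  rw [div_mul_cancel₀ _ hbn.ne'] at h2
  have h3 : (1 + n * ((a - b) / b)) * b ^ n = b ^ n + n * (a - b) * b ^ (n - 1) := by
    rw [← hbm]; field_simp
  rw [h3] at h2; linarith

theorem period_integral_converges_and_vanishes (n p : ℝ) (hn : 1 < n) (hp : 2 < p)
    (F : ℝ → ℝ) (hF : ∀ u, F u = (1 / (2 * n)) * (1 - u ^ 2) ^ n) :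
    (∀ sbar ∈ Ioo (0 : ℝ) 1,
      IntegrableOn (fun s => (F s - F sbar) ^ (-(1 / p))) (Ioo 0 sbar)) ∧
      Tendsto (fun sbar => ∫ s in Ioo 0 sbar, (F s - F sbar) ^ (-(1 / p)))
        (nhdsWithin 0 (Ioi 0)) (nhds 0) := by
  have hn0 : (0:ℝ) < n := by linarith
  have hp0 : (0:ℝ) < p := by linarith
  have hrp : (-1:ℝ) < -(1/p) := by
    have : 1/p < 1 := by rw [div_lt_one hp0]; linarith
    linarith
  have hexp : (0:ℝ) < 1 - 1/p := by linarith
  -- key pointwise lower bound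
  have key : ∀ sbar ∈ Ioo (0:ℝ) 1, ∀ s ∈ Ioo (0:ℝ) sbar,
      sbar * (1 - sbar ^ 2) ^ (n - 1) / 2 * (sbar - s) ≤ F s - F sbar := by
    rintro sbar ⟨hs0, hs1⟩ s ⟨h0, h1⟩
    have hb : (0:ℝ) < 1 - sbar ^ 2 := by nlinarith
    have hab : 1 - sbar ^ 2 ≤ 1 - s ^ 2 := by nlinarith
    have hmain := rpow_sub_rpow_ge hn hb hab
    have hbn1 : 0 < (1 - sbar ^ 2) ^ (n - 1) := Real.rpow_pos_of_pos hb _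
    rw [hF s, hF sbar]
    have h2 : n * ((1 - s ^ 2) - (1 - sbar ^ 2)) * (1 - sbar ^ 2) ^ (n - 1) * (1 / (2 * n))
        ≤ (1 / (2 * n)) * (1 - s ^ 2) ^ n - (1 / (2 * n)) * (1 - sbar ^ 2) ^ n := by
      have h4 := mul_le_mul_of_nonneg_right hmain (by positivity : (0:ℝ) ≤ 1 / (2 * n))
      linarith [h4]
    refine le_trans ?_ h2
    have h5 : n * ((1 - s ^ 2) - (1 - sbar ^ 2)) * (1 - sbar ^ 2) ^ (n - 1) * (1 / (2 * n))
        = (sbar ^ 2 - s ^ 2) * (1 - sbar ^ 2) ^ (n - 1) / 2 := by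
      field_simp; ring
    rw [h5]
    nlinarith [mul_nonneg (mul_nonneg h0.le (sub_nonneg.2 h1.le)) hbn1.le]
  -- integrability and integral bound, for each sbar ∈ Ioo 0 1
  have aux : ∀ sbar ∈ Ioo (0:ℝ) 1,
      IntegrableOn (fun s => (F s - F sbar) ^ (-(1 / p))) (Ioo 0 sbar) ∧
      (∫ s in Ioo 0 sbar, (F s - F sbar) ^ (-(1 / p)))
        ≤ (sbar * (1 - sbar ^ 2) ^ (n - 1) / 2) ^ (-(1/p)) * (sbar ^ (1 - 1/p) / (1 - 1/p)) := by
    rintro sbar hsb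
    obtain ⟨hs0, hs1⟩ := hsb
    set C := sbar * (1 - sbar ^ 2) ^ (n - 1) / 2 with hCdef
    have hb : (0:ℝ) < 1 - sbar ^ 2 := by nlinarith
    have hC : 0 < C := by
      have := Real.rpow_pos_of_pos hb (n - 1); positivity
    have hlb : ∀ s ∈ Ioo (0:ℝ) sbar, C * (sbar - s) ≤ F s - F sbar := by
      intro s hs; have h := key sbar ⟨hs0, hs1⟩ s hs; rw [hCdef]; linarith
    have hpos : ∀ s ∈ Ioo (0:ℝ) sbar, 0 < F s - F sbar := by
      intro s hs
      have h1 : 0 < C * (sbar - s) := mul_pos hC (by linarith [hs.2])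
      linarith [hlb s hs]
    -- the dominating function
    have hII : IntervalIntegrable (fun x : ℝ => (sbar - x) ^ (-(1/p))) volume 0 sbar := by
      have h := (intervalIntegral.intervalIntegrable_rpow' hrp (a := 0) (b := sbar)).comp_sub_left sbar
      simpa using h.symm
    have hInt2 : IntegrableOn (fun s : ℝ => (sbar - s) ^ (-(1/p))) (Ioo 0 sbar) := by
      have := (intervalIntegrable_iff_integrableOn_Ioo_of_le hs0.le).mp hII
      exact this
    have hbound : ∀ s ∈ Ioo (0:ℝ) sbar,
        (F s - F sbar) ^ (-(1/p)) ≤ C ^ (-(1/p)) * (sbar - s) ^ (-(1/p)) := by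
      intro s hs
      have h1 : 0 < C * (sbar - s) := mul_pos hC (by linarith [hs.2])
      have h2 : C * (sbar - s) ≤ F s - F sbar := hlb s hs
      have h3 := Real.rpow_le_rpow_of_nonpos h1 h2 (by linarith [one_div_pos.mpr hp0] : -(1/p) ≤ 0)
      rwa [Real.mul_rpow hC.le (by linarith [hs.2] : (0:ℝ) ≤ sbar - s)] at h3
    have hmeas : AEStronglyMeasurable (fun s => (F s - F sbar) ^ (-(1 / p)))
        (volume.restrict (Ioo 0 sbar)) := by
      have hFc : Continuous F := by
        have hFeq : F = fun u => (1 / (2 * n)) * (1 - u ^ 2) ^ n := funext hF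
        rw [hFeq]
        exact continuous_const.mul ((Real.continuous_rpow_const (by linarith : (0:ℝ) ≤ n)).comp
          (continuous_const.sub (continuous_pow 2)))
      have hcont : ContinuousOn (fun s => (F s - F sbar) ^ (-(1 / p))) (Ioo 0 sbar) :=
        ((hFc.sub continuous_const).continuousOn).rpow_const
          (fun s hs => Or.inl (hpos s hs).ne')
      exact hcont.aestronglyMeasurable measurableSet_Ioo
    have hInt : IntegrableOn (fun s => (F s - F sbar) ^ (-(1 / p))) (Ioo 0 sbar) := by
      refine Integrable.mono' (hInt2.const_mul (C ^ (-(1/p)))) hmeas ?_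
      rw [ae_restrict_iff' measurableSet_Ioo]
      filter_upwards with s hs
      rw [Real.norm_eq_abs, abs_of_nonneg (Real.rpow_nonneg (hpos s hs).le _)]
      exact hbound s hs
    refine ⟨hInt, ?_⟩
    have hmono : (∫ s in Ioo 0 sbar, (F s - F sbar) ^ (-(1 / p)))
        ≤ ∫ s in Ioo 0 sbar, C ^ (-(1/p)) * (sbar - s) ^ (-(1/p)) := by
      refine setIntegral_mono_on hInt (hInt2.const_mul _) measurableSet_Ioo ?_
      intro s hs; exact hbound s hs
    refine hmono.trans ?_
    rw [MeasureTheory.integral_const_mul]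
    have hIval : (∫ s in Ioo 0 sbar, (sbar - s) ^ (-(1/p))) = sbar ^ (1 - 1/p) / (1 - 1/p) := by
      rw [← MeasureTheory.integral_Ioc_eq_integral_Ioo,
        ← intervalIntegral.integral_of_le hs0.le]
      have h := intervalIntegral.integral_comp_sub_left (a := 0) (b := sbar)
        (fun u : ℝ => u ^ (-(1/p))) sbar
      simp only [sub_self, sub_zero] at h
      rw [h, integral_rpow (Or.inl hrp)]
      rw [Real.zero_rpow (by linarith : -(1/p) + 1 ≠ 0)]
      norm_num
      ring_nf
    rw [hIval]
  constructor
  · intro sbar hsb; exact (aux sbar hsb).1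
  · -- squeeze between 0 and K * sbar ^ (1 - 2/p)
    set E₀ : ℝ := ((3/4 : ℝ)) ^ (n - 1) / 2 with hE₀def
    have hE₀ : 0 < E₀ := by
      have := Real.rpow_pos_of_pos (by norm_num : (0:ℝ) < 3/4) (n - 1); positivity
    set K : ℝ := E₀ ^ (-(1/p)) / (1 - 1/p) with hKdef
    have hK : 0 < K := by
      have := Real.rpow_pos_of_pos hE₀ (-(1/p)); positivity
    have hub : ∀ sbar ∈ Ioo (0:ℝ) (1/2),
        (∫ s in Ioo 0 sbar, (F s - F sbar) ^ (-(1 / p))) ≤ K * sbar ^ (1 - 2/p) := by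
      rintro sbar ⟨hs0, hs12⟩
      have hs1 : sbar < 1 := by linarith
      have h1 := (aux sbar ⟨hs0, hs1⟩).2
      have hb : (0:ℝ) < 1 - sbar ^ 2 := by nlinarith
      -- E₀ lower bound for the coefficient
      have hE : E₀ ≤ (1 - sbar ^ 2) ^ (n - 1) / 2 := by
        have h34 : (3/4 : ℝ) ≤ 1 - sbar ^ 2 := by nlinarith
        have := Real.rpow_le_rpow (by norm_num : (0:ℝ) ≤ 3/4) h34 (by linarith : (0:ℝ) ≤ n - 1)
        rw [hE₀def]; linarith
      have hCE : sbar * E₀ ≤ sbar * (1 - sbar ^ 2) ^ (n - 1) / 2 := by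
        have := mul_le_mul_of_nonneg_left hE hs0.le
        calc sbar * E₀ ≤ sbar * ((1 - sbar ^ 2) ^ (n - 1) / 2) := this
          _ = sbar * (1 - sbar ^ 2) ^ (n - 1) / 2 := by ring
      have hCE' : (sbar * (1 - sbar ^ 2) ^ (n - 1) / 2) ^ (-(1/p)) ≤ (sbar * E₀) ^ (-(1/p)) :=
        Real.rpow_le_rpow_of_nonpos (by positivity) hCE (by linarith [one_div_pos.mpr hp0])
      have h2 : (∫ s in Ioo 0 sbar, (F s - F sbar) ^ (-(1 / p)))
          ≤ (sbar * E₀) ^ (-(1/p)) * (sbar ^ (1 - 1/p) / (1 - 1/p)) := by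
        refine h1.trans ?_
        exact mul_le_mul_of_nonneg_right hCE' (by positivity)
      refine h2.trans (le_of_eq ?_)
      have hsplit : sbar ^ (-(1/p)) * sbar ^ (1 - 1/p) = sbar ^ (1 - 2/p) := by
        rw [← Real.rpow_add hs0]; congr 1; ring
      rw [Real.mul_rpow hs0.le hE₀.le, hKdef, ← hsplit]; ring
    have hlb0 : ∀ sbar ∈ Ioo (0:ℝ) (1/2),
        0 ≤ ∫ s in Ioo 0 sbar, (F s - F sbar) ^ (-(1 / p)) := by
      rintro sbar ⟨hs0, hs12⟩
      refine setIntegral_nonneg measurableSet_Ioo ?_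
      intro s hs
      exact Real.rpow_nonneg (by
        have hs1 : sbar < 1 := by linarith
        have hC : 0 < sbar * (1 - sbar ^ 2) ^ (n - 1) / 2 := by
          have hb : (0:ℝ) < 1 - sbar ^ 2 := by nlinarith
          have := Real.rpow_pos_of_pos hb (n - 1); positivity
        have := key sbar ⟨hs0, hs1⟩ s hs
        nlinarith [hs.2]) _
    have hmem : Ioo (0:ℝ) (1/2) ∈ nhdsWithin (0:ℝ) (Ioi 0) :=
      Ioo_mem_nhdsGT_of_mem ⟨le_refl 0, by norm_num⟩
    have htK : Tendsto (fun sbar : ℝ => K * sbar ^ (1 - 2/p))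
        (nhdsWithin 0 (Ioi 0)) (nhds 0) := by
      have hq : (0:ℝ) < 1 - 2/p := by
        have : 2/p < 1 := by rw [div_lt_one hp0]; linarith
        linarith
      have h1 : Tendsto (fun sbar : ℝ => sbar ^ (1 - 2/p)) (nhds 0) (nhds 0) := by
        have hc : ContinuousAt (fun sbar : ℝ => sbar ^ (1 - 2/p)) 0 :=
          Real.continuousAt_rpow_const 0 _ (Or.inr hq.le)
        have h0 : (0:ℝ) ^ (1 - 2/p) = 0 := Real.zero_rpow hq.ne'
        simpa [h0] using hc.tendsto
      have h2 : Tendsto (fun sbar : ℝ => K * sbar ^ (1 - 2/p)) (nhdsWithin 0 (Ioi 0))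
          (nhds (K * 0)) :=
        (h1.mono_left (nhdsWithin_le_nhds (s := Ioi (0:ℝ)))).const_mul K
      simpa using h2
    refine tendsto_of_tendsto_of_tendsto_of_le_of_le' tendsto_const_nhds htK ?_ ?_
    · filter_upwards [hmem] with sbar hsb using hlb0 sbar hsb
    · filter_upwards [hmem] with sbar hsb using hub sbar hsb
end

section
/- Let F(u) = (1/(2n))(1-u²)^n with n ≥ p > 1. Then ∫₀^{s̄} (F(s) - F(s̄))^{-1/p} ds → +∞ as s̄ → 1⁻. -/
open MeasureTheory Set Filter

theorem period_integral_diverges (n p : ℝ) (hp : 1 < p) (hnp : p ≤ n)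
    (F : ℝ → ℝ) (hF : ∀ u, F u = (1 / (2 * n)) * (1 - u ^ 2) ^ n) :
    Tendsto (fun sbar => ∫ s in Ioo 0 sbar, (F s - F sbar) ^ (-(1 / p)))
      (nhdsWithin 1 (Iio 1)) atTop := by
  have hn1 : 1 < n := lt_of_lt_of_le hp hnp
  have hn0 : (0:ℝ) < n := by linarith
  have hp0 : (0:ℝ) < p := by linarith
  set K : ℝ := 2 ^ (n:ℝ) / (2 * n) with hK
  have hKpos : 0 < K := div_pos (Real.rpow_pos_of_pos two_pos n) (by linarith)
  set c : ℝ := K ^ (-(1/p)) with hc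
  have hcpos : 0 < c := Real.rpow_pos_of_pos hKpos _
  have hFcont : Continuous F := by
    have : F = fun u => (1 / (2 * n)) * (1 - u ^ 2) ^ (n:ℝ) := funext hF
    rw [this]
    exact continuous_const.mul
      ((continuous_const.sub (continuous_pow 2)).rpow_const fun x => Or.inr hn0.le)
  have key : ∀ sb ∈ Ioo (0:ℝ) 1,
      c * Real.log ((1 - sb)⁻¹) ≤ ∫ s in Ioo 0 sb, (F s - F sb) ^ (-(1 / p)) := by
    intro sb hsb
    obtain ⟨hsb0, hsb1⟩ := hsb
    have hb : (0:ℝ) < 1 - sb ^ 2 := by nlinarith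
    have hFsb_nonneg : 0 ≤ F sb := by
      rw [hF]
      positivity
    -- lower bound on F s - F sb (for integrability)
    have hlow : ∀ s ∈ Ioo (0:ℝ) sb,
        (1/2) * (1 - sb ^ 2) ^ (n - 1 : ℝ) * sb * (sb - s) ≤ F s - F sb := by
      intro s hs
      obtain ⟨hs0, hssb⟩ := hs
      have hs1 : s < 1 := lt_trans hssb hsb1
      have ha : (0:ℝ) < 1 - s ^ 2 := by nlinarith
      have hba : 1 - sb ^ 2 ≤ 1 - s ^ 2 := by nlinarith
      set a := 1 - s ^ 2 with hadef
      set b := 1 - sb ^ 2 with hbdef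
      have hbern : b ^ (n:ℝ) + n * (a - b) * b ^ (n - 1 : ℝ) ≤ a ^ (n:ℝ) := by
        have ht : (-1:ℝ) ≤ (a - b) / b := by
          have : (0:ℝ) ≤ (a - b) / b := div_nonneg (by linarith) hb.le
          linarith
        have hB := one_add_mul_self_le_rpow_one_add ht hn1.le
        have h1t : (1:ℝ) + (a - b)/b = a / b := by field_simp; ring
        rw [h1t, Real.div_rpow ha.le hb.le] at hB
        have hbn : (0:ℝ) < b ^ (n:ℝ) := Real.rpow_pos_of_pos hb _
        have hB2 : (1 + n * ((a - b)/b)) * b ^ (n:ℝ) ≤ a ^ (n:ℝ) := by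
          rw [← le_div_iff₀ hbn]; exact hB
        have hbn1 : b ^ (n - 1 : ℝ) = b ^ (n:ℝ) / b := by
          rw [Real.rpow_sub hb, Real.rpow_one]
        calc b ^ (n:ℝ) + n * (a - b) * b ^ (n - 1 : ℝ)
            = (1 + n * ((a - b)/b)) * b ^ (n:ℝ) := by
              rw [hbn1]; field_simp
          _ ≤ a ^ (n:ℝ) := hB2
      have hab : sb * (sb - s) ≤ a - b := by
        rw [hadef, hbdef]; nlinarith
      have hbpow : (0:ℝ) < b ^ (n - 1 : ℝ) := Real.rpow_pos_of_pos hb _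
      rw [hF, hF]
      have heq : 1/(2*n) * (n * (a - b) * b ^ (n-1:ℝ)) = (1/2) * b ^ (n-1:ℝ) * (a - b) := by
        field_simp
      have h1 : (1/2) * b ^ (n-1:ℝ) * sb * (sb - s) ≤ (1/2) * b ^ (n-1:ℝ) * (a - b) := by
        have := mul_le_mul_of_nonneg_left hab (le_of_lt (by positivity : (0:ℝ) < (1/2) * b ^ (n-1:ℝ)))
        nlinarith [this]
      have h2 : 1/(2*n) * (b ^ (n:ℝ) + n * (a - b) * b ^ (n - 1 : ℝ)) ≤ 1/(2*n) * a ^ (n:ℝ) :=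
        mul_le_mul_of_nonneg_left hbern (by positivity)
      have h3 : (1/2) * b ^ (n-1:ℝ) * (a - b) ≤ 1/(2*n) * a ^ (n:ℝ) - 1/(2*n) * b ^ (n:ℝ) := by
        rw [← heq]
        have : 1/(2*n) * (b ^ (n:ℝ) + n * (a - b) * b ^ (n - 1 : ℝ))
            = 1/(2*n) * b ^ (n:ℝ) + 1/(2*n) * (n * (a - b) * b ^ (n-1:ℝ)) := by ring
        linarith [h2, this.symm.le]
      calc (1/2) * b ^ (n-1:ℝ) * sb * (sb - s)
          ≤ 1/(2*n) * a ^ (n:ℝ) - 1/(2*n) * b ^ (n:ℝ) := le_trans h1 h3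
        _ = 1 / (2*n) * (1 - s ^ 2) ^ (n:ℝ) - 1 / (2*n) * (1 - sb ^ 2) ^ (n:ℝ) := rfl
    set m : ℝ := (1/2) * (1 - sb ^ 2) ^ (n - 1 : ℝ) * sb with hm
    have hmpos : 0 < m := by
      have hbpow : (0:ℝ) < (1 - sb ^ 2) ^ (n - 1 : ℝ) := Real.rpow_pos_of_pos hb _
      exact mul_pos (mul_pos one_half_pos hbpow) hsb0
    have hpos : ∀ s ∈ Ioo (0:ℝ) sb, 0 < F s - F sb := by
      intro s hs
      have h := hlow s hs
      have h' : 0 < m * (sb - s) := mul_pos hmpos (sub_pos.2 hs.2)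
      calc (0:ℝ) < m * (sb - s) := h'
        _ ≤ F s - F sb := h
    -- upper bound on F s - F sb (for the divergence estimate)
    have hup : ∀ s ∈ Ioo (0:ℝ) sb, F s - F sb ≤ K * (1 - s) ^ (p:ℝ) := by
      intro s hs
      obtain ⟨hs0, hssb⟩ := hs
      have hs1 : s < 1 := lt_trans hssb hsb1
      have h1s : (0:ℝ) < 1 - s := by linarith
      have hFs : F s ≤ K * (1 - s) ^ (p:ℝ) := by
        rw [hF]
        have h2 : (0:ℝ) ≤ 1 - s ^ 2 := by nlinarith
        have h3 : 1 - s ^ 2 ≤ 2 * (1 - s) := by nlinarith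
        have h4 : (1 - s ^ 2) ^ (n:ℝ) ≤ (2 * (1 - s)) ^ (n:ℝ) :=
          Real.rpow_le_rpow h2 h3 hn0.le
        have h5 : (2 * (1 - s)) ^ (n:ℝ) = 2 ^ (n:ℝ) * (1 - s) ^ (n:ℝ) :=
          Real.mul_rpow (by norm_num) h1s.le
        have h6 : (1 - s) ^ (n:ℝ) ≤ (1 - s) ^ (p:ℝ) :=
          Real.rpow_le_rpow_of_exponent_ge h1s (by linarith) hnp
        have h7 : (0:ℝ) < 2 ^ (n:ℝ) := Real.rpow_pos_of_pos two_pos _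
        calc 1 / (2 * n) * (1 - s ^ 2) ^ (n:ℝ)
            ≤ 1 / (2 * n) * (2 ^ (n:ℝ) * (1 - s) ^ (n:ℝ)) := by
              rw [← h5]; exact mul_le_mul_of_nonneg_left h4 (by positivity)
          _ ≤ 1 / (2 * n) * (2 ^ (n:ℝ) * (1 - s) ^ (p:ℝ)) := by
              have := mul_le_mul_of_nonneg_left h6 h7.le
              exact mul_le_mul_of_nonneg_left this (by positivity)
          _ = K * (1 - s) ^ (p:ℝ) := by rw [hK]; ring
      linarith [hFs]
    -- pointwise inequality with c * (1-s)⁻¹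
    have hexp_neg : (-(1/p) : ℝ) ≤ 0 := by
      have : (0:ℝ) < 1/p := by positivity
      linarith
    have hpt : ∀ s ∈ Ioo (0:ℝ) sb, c * (1 - s)⁻¹ ≤ (F s - F sb) ^ (-(1/p)) := by
      intro s hs
      have h1s : (0:ℝ) < 1 - s := by
        have := hs.2; linarith [hsb1]
      have h1 : (K * (1 - s) ^ (p:ℝ)) ^ (-(1/p)) ≤ (F s - F sb) ^ (-(1/p)) :=
        Real.rpow_le_rpow_of_nonpos (hpos s hs) (hup s hs) hexp_neg
      have h2 : (K * (1 - s) ^ (p:ℝ)) ^ (-(1/p)) = c * (1 - s)⁻¹ := by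
        rw [Real.mul_rpow hKpos.le (Real.rpow_nonneg h1s.le _), ← Real.rpow_mul h1s.le]
        have hpe : p * (-(1/p)) = -1 := by field_simp
        rw [hpe, Real.rpow_neg_one]
      linarith [h1, h2.le, h2.ge]
    -- integrability of the integrand
    have hintg : IntegrableOn (fun s => (F s - F sb) ^ (-(1/p))) (Ioo 0 sb) := by
      have hexp : (-1:ℝ) < -(1/p) := by
        have : 1/p < 1 := by rw [div_lt_one hp0]; exact hp
        linarith
      have h1 : IntervalIntegrable (fun x : ℝ => x ^ (-(1/p) : ℝ)) volume 0 sb :=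
        intervalIntegral.intervalIntegrable_rpow' hexp
      have h2 : IntervalIntegrable (fun x : ℝ => (sb - x) ^ (-(1/p) : ℝ)) volume 0 sb := by
        have h := h1.comp_sub_left sb
        simpa using h.symm
      have h3 : IntervalIntegrable
          (fun x : ℝ => m ^ (-(1/p):ℝ) * (sb - x) ^ (-(1/p) : ℝ)) volume 0 sb :=
        h2.const_mul _
      have h4 : IntegrableOn
          (fun x : ℝ => m ^ (-(1/p):ℝ) * (sb - x) ^ (-(1/p) : ℝ)) (Ioo 0 sb) := by
        rw [← intervalIntegrable_iff_integrableOn_Ioo_of_le hsb0.le]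
        exact h3
      have hmeas : AEStronglyMeasurable (fun s => (F s - F sb) ^ (-(1/p)))
          (volume.restrict (Ioo 0 sb)) := by
        apply ContinuousOn.aestronglyMeasurable _ measurableSet_Ioo
        exact (hFcont.continuousOn.sub continuousOn_const).rpow_const
          (fun x hx => Or.inl (hpos x hx).ne')
      refine Integrable.mono h4 hmeas ?_
      filter_upwards [ae_restrict_mem measurableSet_Ioo] with s hs
      have hfs : 0 < F s - F sb := hpos s hs
      have hms : 0 < m * (sb - s) := mul_pos hmpos (sub_pos.2 hs.2)
      have hle : (F s - F sb) ^ (-(1/p)) ≤ (m * (sb - s)) ^ (-(1/p)) :=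
        Real.rpow_le_rpow_of_nonpos hms (hlow s hs) hexp_neg
      have heqm : (m * (sb - s)) ^ (-(1/p):ℝ) = m ^ (-(1/p):ℝ) * (sb - s) ^ (-(1/p):ℝ) :=
        Real.mul_rpow hmpos.le (by linarith [hs.2] : (0:ℝ) ≤ sb - s)
      rw [Real.norm_eq_abs, Real.norm_eq_abs, abs_of_pos (Real.rpow_pos_of_pos hfs _),
        abs_of_pos (by rw [← heqm]; exact Real.rpow_pos_of_pos hms _), ← heqm]
      exact hle
    -- lower function integrable
    have hflow_int : IntegrableOn (fun s : ℝ => c * (1 - s)⁻¹) (Ioo 0 sb) := by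
      apply (ContinuousOn.integrableOn_Icc ?_).mono_set Ioo_subset_Icc_self
      apply continuousOn_const.mul
      apply ContinuousOn.inv₀ ((continuous_const.sub continuous_id).continuousOn)
      intro x hx
      have hx2 : x ≤ sb := hx.2
      have hx3 : (0:ℝ) < 1 - x := by linarith [hsb1]
      simpa using hx3.ne'
    have hmono : (∫ s in Ioo 0 sb, c * (1 - s)⁻¹)
        ≤ ∫ s in Ioo 0 sb, (F s - F sb) ^ (-(1/p)) :=
      setIntegral_mono_on hflow_int hintg measurableSet_Ioo hpt
    have hval : (∫ s in Ioo 0 sb, c * (1 - s)⁻¹) = c * Real.log ((1 - sb)⁻¹) := by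
      rw [← integral_Ioc_eq_integral_Ioo, ← intervalIntegral.integral_of_le hsb0.le,
        intervalIntegral.integral_const_mul]
      congr 1
      have hcs := intervalIntegral.integral_comp_sub_left
        (a := (0:ℝ)) (b := sb) (fun x : ℝ => x⁻¹) 1
      simp only [sub_zero] at hcs
      rw [hcs, integral_inv ?h0]
      · rw [one_div]
      · intro hmem
        rw [Set.mem_uIcc] at hmem
        rcases hmem with ⟨h1', h2'⟩ | ⟨h1', h2'⟩ <;> linarith
    rw [← hval]
    exact hmono
  have htend : Tendsto (fun sb : ℝ => c * Real.log ((1 - sb)⁻¹))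
      (nhdsWithin 1 (Iio 1)) atTop := by
    apply Tendsto.const_mul_atTop hcpos
    have h1 : Tendsto (fun sb : ℝ => 1 - sb) (nhdsWithin 1 (Iio 1))
        (nhdsWithin 0 (Ioi 0)) := by
      apply tendsto_nhdsWithin_of_tendsto_nhds_of_eventually_within
      · have h : Tendsto (fun sb : ℝ => 1 - sb) (nhds 1) (nhds (1 - 1)) :=
          tendsto_const_nhds.sub tendsto_id
        have h0 : (1:ℝ) - 1 = 0 := by norm_num
        rw [h0] at h
        exact h.mono_left nhdsWithin_le_nhds
      · filter_upwards [self_mem_nhdsWithin] with x hx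
        simp only [mem_Ioi]
        exact sub_pos.2 hx
    exact Real.tendsto_log_atTop.comp h1.inv_tendsto_nhdsGT_zero
  apply tendsto_atTop_mono' _ ?_ htend
  filter_upwards [Ioo_mem_nhdsLT (by norm_num : (0:ℝ) < 1)] with sb hsb
  exact key sb hsb
end
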